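/- Let (X, μ) be a measurable space with μ a nonnegative finite measure. If f_n is a sequence in L¹(X, μ) converging weakly in L¹(X, μ) to f, and g_n is a sequence in L¹(X, μ) converging μ-almost everywhere to g with |g_n| ≤ C for a constant C > 0 independent of n, then ∫_X f g dμ = lim_{n→∞} ∫_X f_n g_n dμ. -/

import Mathlib

open MeasureTheory Filter Topology
open scoped ENNReal

section Helpers

set_option maxHeartbeats 1000000
set_option synthInstance.maxHeartbeats 400000
set_option linter.unusedSectionVars false

lemma abscont {X : Type*} [MeasurableSpace X] {μ : Measure X} {w : X → ℝ}
    (hw : Integrable w μ) {ε : ℝ} (hε : 0 < ε) :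
    ∃ δ : ℝ≥0∞, 0 < δ ∧ ∀ s : Set X, μ s < δ → ∫ x in s, |w x| ∂μ < ε := by
  have hfin : ∫⁻ x, (‖w x‖₊ : ℝ≥0∞) ∂μ ≠ ∞ := hw.2.ne
  obtain ⟨δ, hδ, h⟩ := exists_pos_setLIntegral_lt_of_measure_lt (μ := μ) hfin
    (ε := ENNReal.ofReal ε) (by simp [hε])
  refine ⟨δ, hδ, fun s hs => ?_⟩
  have h2 := h s hs
  have h3 : ENNReal.ofReal (∫ x in s, |w x| ∂μ) = ∫⁻ x in s, ‖w x‖₊ ∂μ := by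
    have := ofReal_integral_norm_eq_lintegral_enorm (hw.restrict (s := s))
    simpa [Real.norm_eq_abs, ← enorm_eq_nnnorm] using this
  rw [← h3] at h2
  exact (ENNReal.ofReal_lt_ofReal_iff hε).mp h2

lemma integral_mul_lt {X : Type*} [MeasurableSpace X] {μ : Measure X} [IsFiniteMeasure μ]
    {w : X → ℝ} (hw : Integrable w μ) {ε : ℝ} (hε : 0 < ε) :
    ∃ δ : ℝ, 0 < δ ∧ ∀ u : X → ℝ, AEStronglyMeasurable u μ → (∀ᵐ x ∂μ, |u x| ≤ 1) →
      (∫ x, |u x| ∂μ) < δ → (∫ x, |w x| * |u x| ∂μ) < ε := by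
  obtain ⟨δ₀, hδ₀, habs⟩ := abscont hw (half_pos hε)
  set W := ∫ x, |w x| ∂μ with hW
  have hW0 : 0 ≤ W := integral_nonneg fun x => abs_nonneg _
  set θ := ε / (2 * (W + 1)) with hθ
  have hθpos : 0 < θ := div_pos hε (by linarith)
  set δ₁ := min δ₀ 1 with hδ₁
  have hδ₁pos : 0 < δ₁ := lt_min hδ₀ one_pos
  have hδ₁top : δ₁ ≠ ∞ := ne_top_of_le_ne_top ENNReal.one_ne_top (min_le_right _ _)
  refine ⟨θ * δ₁.toReal, mul_pos hθpos (ENNReal.toReal_pos hδ₁pos.ne' hδ₁top), ?_⟩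
  intro u hu hub hint
  set u' := hu.mk u with hu'def
  have hue : u =ᵐ[μ] u' := hu.ae_eq_mk
  have hu' : StronglyMeasurable u' := hu.stronglyMeasurable_mk
  have hA : MeasurableSet {x | θ ≤ |u' x|} := measurableSet_le measurable_const hu'.measurable.abs
  set A := {x | θ ≤ |u' x|} with hAdef
  have huint : Integrable u μ := by
    refine (integrable_const (1:ℝ)).mono' hu ?_
    filter_upwards [hub] with x hx
    simpa [Real.norm_eq_abs] using hx
  have hcheb : θ * (μ A).toReal ≤ ∫ x, |u' x| ∂μ :=
    mul_meas_ge_le_integral_of_nonneg (Eventually.of_forall fun x => abs_nonneg _)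
      ((huint.congr hue).abs) θ
  have hint' : ∫ x, |u' x| ∂μ = ∫ x, |u x| ∂μ := by
    refine integral_congr_ae ?_
    filter_upwards [hue] with x hx using by simp [hx]
  have hμA : μ A < δ₀ := by
    have h1 : θ * (μ A).toReal < θ * δ₁.toReal := by
      calc θ * (μ A).toReal ≤ ∫ x, |u' x| ∂μ := hcheb
        _ = ∫ x, |u x| ∂μ := hint'
        _ < θ * δ₁.toReal := hint
    have h2 : (μ A).toReal < δ₁.toReal := lt_of_mul_lt_mul_left h1 hθpos.le
    have h3 : μ A < δ₁ := by
      rwa [← ENNReal.toReal_lt_toReal (measure_ne_top μ A) hδ₁top]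
    exact h3.trans_le (min_le_left _ _)
  have hAsmall : ∫ x in A, |w x| ∂μ < ε / 2 := habs A hμA
  have hptwise : ∀ᵐ x ∂μ, |w x| * |u x| ≤ θ * |w x| + A.indicator (fun x => |w x|) x := by
    filter_upwards [hub, hue] with x hx hxe
    by_cases hxA : x ∈ A
    · have : |w x| * |u x| ≤ |w x| * 1 := by
        apply mul_le_mul_of_nonneg_left hx (abs_nonneg _)
      simp only [Set.indicator_of_mem hxA]
      nlinarith [abs_nonneg (w x), hθpos.le]
    · have hlt : |u x| ≤ θ := by
        rw [hxe]
        exact le_of_not_ge fun hh => hxA hh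
      simp only [Set.indicator_of_notMem hxA]
      nlinarith [abs_nonneg (w x), abs_nonneg (u x)]
  have hLint : Integrable (fun x => |w x| * |u x|) μ := by
    have habs : AEStronglyMeasurable (fun x => |u x|) μ := by
      simpa [Real.norm_eq_abs] using hu.norm
    have hb : ∀ᵐ x ∂μ, ‖|u x|‖ ≤ 1 := by
      filter_upwards [hub] with x hx
      simpa [Real.norm_eq_abs, abs_abs] using hx
    exact ((hw.abs.bdd_mul (c := 1) habs hb).congr
      (Eventually.of_forall fun x => mul_comm _ _))
  have hRint : Integrable (fun x => θ * |w x| + A.indicator (fun x => |w x|) x) μ :=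
    (hw.abs.const_mul θ).add (hw.abs.indicator hA)
  have hmono := integral_mono_ae hLint hRint hptwise
  rw [integral_add (hw.abs.const_mul θ) (hw.abs.indicator hA), integral_const_mul,
    integral_indicator hA] at hmono
  have hθW : θ * W ≤ ε / 2 := by
    rw [hθ, div_mul_eq_mul_div, div_le_div_iff₀ (by linarith) (by norm_num)]
    nlinarith
  calc ∫ x, |w x| * |u x| ∂μ ≤ θ * W + ∫ x in A, |w x| ∂μ := hmono
    _ < ε / 2 + ε / 2 := add_lt_add_of_le_of_lt hθW hAsmall
    _ = ε := by ring

variable {X : Type*} [MeasurableSpace X] {μ : Measure X} [IsFiniteMeasure μ]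

lemma Linf_ae_bound (h : Lp ℝ ∞ μ) : ∀ᵐ x ∂μ, ‖h x‖ ≤ ‖h‖ := by
  have h1 : ∀ᵐ x ∂μ, (‖h x‖₊ : ℝ≥0∞) ≤ eLpNormEssSup (⇑h) μ := ae_le_eLpNormEssSup
  have h2 : eLpNormEssSup (⇑h) μ ≠ ∞ := by
    have := Lp.eLpNorm_ne_top h
    rwa [eLpNorm_exponent_top] at this
  filter_upwards [h1] with x hx
  rw [Lp.norm_def, eLpNorm_exponent_top]
  have := ENNReal.toReal_mono h2 hx
  simpa using this

noncomputable def pairing (φ : X → ℝ) (hφ : Integrable φ μ) : Lp ℝ ∞ μ →L[ℝ] ℝ := by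
  have hmul : ∀ h : Lp ℝ ∞ μ, Integrable (fun x => φ x * h x) μ := fun h =>
    (hφ.bdd_mul (c := ‖h‖) (Lp.aestronglyMeasurable h) (Linf_ae_bound h)).congr
      (Eventually.of_forall fun x => mul_comm _ _)
  exact LinearMap.mkContinuous
    { toFun := fun h => ∫ x, φ x * h x ∂μ
      map_add' := fun h₁ h₂ => by
        have heq : ∀ᵐ x ∂μ, φ x * (↑(h₁ + h₂) : X → ℝ) x = φ x * h₁ x + φ x * h₂ x := by
          filter_upwards [Lp.coeFn_add h₁ h₂] with x hx
          rw [hx, Pi.add_apply]; ring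
        rw [integral_congr_ae heq, integral_add (hmul h₁) (hmul h₂)]
      map_smul' := fun r h => by
        have heq : ∀ᵐ x ∂μ, φ x * (↑(r • h) : X → ℝ) x = r * (φ x * h x) := by
          filter_upwards [Lp.coeFn_smul r h] with x hx
          rw [hx, Pi.smul_apply, smul_eq_mul]; ring
        rw [integral_congr_ae heq, integral_const_mul]
        rfl }
    (∫ x, |φ x| ∂μ) (fun h => by
      simp only [LinearMap.coe_mk, AddHom.coe_mk]
      calc ‖∫ x, φ x * h x ∂μ‖ ≤ ∫ x, ‖φ x * h x‖ ∂μ := norm_integral_le_integral_norm _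
        _ ≤ ∫ x, |φ x| * ‖h‖ ∂μ := by
            refine integral_mono_ae (hmul h).norm ((hφ.abs.mul_const _)) ?_
            filter_upwards [Linf_ae_bound h] with x hx
            rw [norm_mul, Real.norm_eq_abs (φ x)]
            exact mul_le_mul_of_nonneg_left (by simpa using hx) (abs_nonneg _)
        _ = (∫ x, |φ x| ∂μ) * ‖h‖ := integral_mul_const _ _)

@[simp] lemma pairing_apply (φ : X → ℝ) (hφ : Integrable φ μ) (h : Lp ℝ ∞ μ) :
    pairing φ hφ h = ∫ x, φ x * h x ∂μ := rfl

lemma normbound (fn : ℕ → X → ℝ) (hfn : ∀ n, Integrable (fn n) μ)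
    (hconv : ∀ h : X → ℝ, Measurable h → (∃ B : ℝ, ∀ x, |h x| ≤ B) →
      ∃ L, Tendsto (fun n => ∫ x, fn n x * h x ∂μ) atTop (𝓝 L)) :
    ∃ M : ℝ, 0 ≤ M ∧ ∀ n, ∫ x, |fn n x| ∂μ ≤ M := by
  have : Fact ((1:ℝ≥0∞) ≤ ∞) := ⟨le_top⟩
  have hpt : ∀ h : Lp ℝ ∞ μ, ∃ c, ∀ n, ‖pairing (fn n) (hfn n) h‖ ≤ c := by
    intro h
    set B := ‖h‖ with hB
    have hB0 : 0 ≤ B := norm_nonneg _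
    set h' : X → ℝ := fun x => max (-(B+1)) (min (B+1) (h x)) with hh'
    have hmeas : Measurable h' :=
      Measurable.max measurable_const (Measurable.min measurable_const (Lp.stronglyMeasurable h).measurable)
    have hbd : ∃ B' : ℝ, ∀ x, |h' x| ≤ B' := by
      refine ⟨B+1, fun x => abs_le.mpr ⟨le_max_left _ _, max_le (by linarith) (min_le_left _ _)⟩⟩
    have heq : (⇑h : X → ℝ) =ᵐ[μ] h' := by
      filter_upwards [Linf_ae_bound h] with x hx
      have hx' : |h x| ≤ B := by simpa using hx
      rw [hh']
      simp only []
      rw [min_eq_right (by cases' abs_le.mp hx' with h1 h2; linarith),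
        max_eq_right (by cases' abs_le.mp hx' with h1 h2; linarith)]
    obtain ⟨L, hL⟩ := hconv h' hmeas hbd
    have hLL : Tendsto (fun n => ‖∫ x, fn n x * h' x ∂μ‖) atTop (𝓝 ‖L‖) := hL.norm
    obtain ⟨c, hc⟩ := hLL.bddAbove_range
    refine ⟨c, fun n => ?_⟩
    have : pairing (fn n) (hfn n) h = ∫ x, fn n x * h' x ∂μ := by
      rw [pairing_apply]
      exact integral_congr_ae (by filter_upwards [heq] with x hx using by rw [hx])
    rw [this]
    exact hc ⟨n, rfl⟩
  obtain ⟨M', hM'⟩ := banach_steinhaus hpt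
  refine ⟨max M' 0, le_max_right _ _, fun n => ?_⟩
  set fm := (hfn n).1.mk (fn n) with hfm
  have hfmm : Measurable fm := (hfn n).1.stronglyMeasurable_mk.measurable
  have hfme : fn n =ᵐ[μ] fm := (hfn n).1.ae_eq_mk
  set s : X → ℝ := fun x => if 0 ≤ fm x then (1:ℝ) else -1 with hs
  have hsm : Measurable s := Measurable.ite (measurableSet_le measurable_const hfmm)
    measurable_const measurable_const
  have hsb : ∀ x, ‖s x‖ ≤ (1:ℝ) := fun x => by
    rw [hs]; dsimp only; split <;> simp
  have hsmem : MemLp s ∞ μ :=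
    memLp_top_of_bound hsm.aestronglyMeasurable 1 (Eventually.of_forall hsb)
  set S := hsmem.toLp s with hS
  have hSs : (⇑S : X → ℝ) =ᵐ[μ] s := hsmem.coeFn_toLp
  have hSnorm : ‖S‖ ≤ 1 := by
    have := Lp.norm_le_of_ae_bound (f := S) (C := 1) one_pos.le
      (by filter_upwards [hSs] with x hx using by rw [hx]; exact hsb x)
    simpa using this
  have hval : pairing (fn n) (hfn n) S = ∫ x, |fn n x| ∂μ := by
    rw [pairing_apply]
    refine integral_congr_ae ?_
    filter_upwards [hSs, hfme] with x hx hfx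
    rw [hx, hfx, hs]
    dsimp only
    split <;> rename_i hcase
    · rw [abs_of_nonneg hcase]; ring
    · rw [abs_of_neg (lt_of_not_ge hcase)]; ring
  have := (pairing (fn n) (hfn n)).le_opNorm S
  rw [hval] at this
  calc ∫ x, |fn n x| ∂μ ≤ ‖∫ x, |fn n x| ∂μ‖ := le_abs_self _
    _ ≤ ‖pairing (fn n) (hfn n)‖ * ‖S‖ := this
    _ ≤ M' * 1 := mul_le_mul (hM' n) hSnorm (norm_nonneg _) ((norm_nonneg _).trans (hM' n))
    _ ≤ max M' 0 := by simp [le_max_left]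

lemma uac (fn : ℕ → X → ℝ) (hfn : ∀ n, Integrable (fn n) μ)
    (hconv : ∀ A : Set X, MeasurableSet A →
      ∃ L, Tendsto (fun n => ∫ x in A, fn n x ∂μ) atTop (𝓝 L))
    {ε : ℝ} (hε : 0 < ε) :
    ∃ δ : ℝ≥0∞, 0 < δ ∧ ∀ n, ∀ E : Set X, MeasurableSet E → μ E < δ →
      ∫ x in E, |fn n x| ∂μ ≤ ε := by
  haveI : Fact ((1:ℝ≥0∞) ≤ 1) := ⟨le_refl _⟩
  have hε₆ : 0 < ε / 6 := by linarith
  set ε₆ := ε / 6 with hε₆def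
  -- the space of (classes of) indicator functions
  set S : Set (Lp ℝ 1 μ) := {h | ∀ᵐ x ∂μ, h x = 0 ∨ h x = 1} with hSdef
  have hSclosed : IsClosed S := by
    refine IsSeqClosed.isClosed ?_
    intro seq h hmem htend
    have htm : TendstoInMeasure μ (fun j => ⇑(seq j)) atTop ⇑h :=
      tendstoInMeasure_of_tendsto_Lp htend
    obtain ⟨ns, -, hae⟩ := htm.exists_seq_tendsto_ae
    have hall : ∀ᵐ x ∂μ, ∀ j, seq (ns j) x = 0 ∨ seq (ns j) x = 1 :=
      ae_all_iff.mpr fun j => hmem (ns j)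
    filter_upwards [hae, hall] with x hx hallx
    have hclosed : IsClosed ({0, 1} : Set ℝ) := (Set.toFinite _).isClosed
    have : h x ∈ ({0, 1} : Set ℝ) := by
      refine hclosed.mem_of_tendsto hx (Eventually.of_forall fun j => ?_)
      rcases hallx j with h1 | h1 <;> simp [h1]
    simpa using this
  have hS0 : (0 : Lp ℝ 1 μ) ∈ S := by
    filter_upwards [Lp.coeFn_zero (E := ℝ) (p := 1) (μ := μ)] with x hx
    exact Or.inl hx
  have : CompleteSpace ↥S := hSclosed.completeSpace_coe
  haveI : Nonempty ↥S := ⟨⟨0, hS0⟩⟩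
  set T : ℕ → Lp ℝ 1 μ → ℝ := fun n h => ∫ x, fn n x * h x ∂μ with hTdef
  have hSbd : ∀ h : Lp ℝ 1 μ, h ∈ S → ∀ᵐ x ∂μ, |h x| ≤ 1 := by
    intro h hh
    filter_upwards [hh] with x hx
    rcases hx with h1 | h1 <;> simp [h1]
  -- continuity of the pairings on S
  have hTcont : ∀ n, Continuous (fun h : ↥S => T n ↑h) := by
    intro n
    refine continuous_iff_seqContinuous.mpr ?_
    intro seq h htend
    rw [Metric.tendsto_atTop]
    intro η hη
    obtain ⟨δ, hδ, hkey⟩ := integral_mul_lt (hfn n) hη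
    have htd : Tendsto (fun j => dist ((seq j : Lp ℝ 1 μ)) ((h : Lp ℝ 1 μ))) atTop (𝓝 0) := by
      have := (continuous_subtype_val.tendsto h).comp htend
      simpa [tendsto_iff_dist_tendsto_zero] using tendsto_iff_dist_tendsto_zero.mp this
    have htendLp : Tendsto (fun j => (seq j : Lp ℝ 1 μ)) atTop (𝓝 (h : Lp ℝ 1 μ)) :=
      (continuous_subtype_val.tendsto h).comp htend
    obtain ⟨N, hN⟩ := Metric.tendsto_atTop.mp htendLp δ hδ
    refine ⟨N, fun j hj => ?_⟩
    set u : X → ℝ := fun x => (seq j : Lp ℝ 1 μ) x - (h : Lp ℝ 1 μ) x with hu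
    have husm : AEStronglyMeasurable u μ :=
      (Lp.aestronglyMeasurable _).sub (Lp.aestronglyMeasurable _)
    have hub : ∀ᵐ x ∂μ, |u x| ≤ 1 := by
      filter_upwards [(seq j).2, h.2] with x hx1 hx2
      rcases hx1 with e1 | e1 <;> rcases hx2 with e2 | e2 <;> simp [hu, e1, e2]
    have hintu : ∫ x, |u x| ∂μ < δ := by
      have hd := hN j hj
      rw [L1.dist_eq_integral_dist] at hd
      have : ∫ x, |u x| ∂μ = ∫ x, dist ((seq j : Lp ℝ 1 μ) x) ((h : Lp ℝ 1 μ) x) ∂μ := by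
        refine integral_congr_ae (Eventually.of_forall fun x => ?_)
        simp [hu, Real.dist_eq]
      rwa [this]
    have hfin := hkey u husm hub hintu
    have hi1 : Integrable (fun x => fn n x * (seq j : Lp ℝ 1 μ) x) μ :=
      ((hfn n).bdd_mul (c := 1) (Lp.aestronglyMeasurable _)
        (by filter_upwards [hSbd _ (seq j).2] with x hx using by
              simpa [Real.norm_eq_abs] using hx)).congr
        (Eventually.of_forall fun x => mul_comm _ _)
    have hi2 : Integrable (fun x => fn n x * (h : Lp ℝ 1 μ) x) μ :=
      ((hfn n).bdd_mul (c := 1) (Lp.aestronglyMeasurable _)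
        (by filter_upwards [hSbd _ h.2] with x hx using by
              simpa [Real.norm_eq_abs] using hx)).congr
        (Eventually.of_forall fun x => mul_comm _ _)
    show dist (T n ↑(seq j)) (T n ↑h) < η
    rw [Real.dist_eq]
    simp only [hTdef]
    rw [← integral_sub hi1 hi2]
    calc |∫ x, (fn n x * (seq j : Lp ℝ 1 μ) x - fn n x * (h : Lp ℝ 1 μ) x) ∂μ|
        = |∫ x, fn n x * u x ∂μ| := by
          congr 1
          exact integral_congr_ae (Eventually.of_forall fun x => by rw [hu]; ring)
      _ ≤ ∫ x, |fn n x| * |u x| ∂μ := by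
          simpa [Real.norm_eq_abs, abs_mul] using
            norm_integral_le_integral_norm (μ := μ) (fun x => fn n x * u x)
      _ < η := hfin
  -- generic : pairing against an a.e. indicator is a set integral
  have hTind : ∀ (m : ℕ) (hh : Lp ℝ 1 μ) (B : Set X), MeasurableSet B →
      (⇑hh =ᵐ[μ] B.indicator (fun _ => (1:ℝ))) → T m hh = ∫ x in B, fn m x ∂μ := by
    intro m hh B hB heq
    rw [hTdef]
    dsimp only
    rw [← integral_indicator hB]
    refine integral_congr_ae ?_
    filter_upwards [heq] with x hx
    rw [hx]
    by_cases hxB : x ∈ B <;> simp [hxB]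
  -- the closed pieces
  set F : ℕ → Set ↥S := fun k => ⋂ m, ⋂ n', {h : ↥S | k ≤ m → k ≤ n' →
    |T m ↑h - T n' ↑h| ≤ ε₆} with hFdef
  have hFclosed : ∀ k, IsClosed (F k) := by
    intro k
    refine isClosed_iInter fun m => isClosed_iInter fun n' => ?_
    by_cases h1 : k ≤ m
    · by_cases h2 : k ≤ n'
      · have : {h : ↥S | k ≤ m → k ≤ n' → |T m ↑h - T n' ↑h| ≤ ε₆}
            = {h : ↥S | |T m ↑h - T n' ↑h| ≤ ε₆} := by
          ext hh; simp [h1, h2]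
        rw [this]
        exact isClosed_le (((hTcont m).sub (hTcont n')).abs) continuous_const
      · have : {h : ↥S | k ≤ m → k ≤ n' → |T m ↑h - T n' ↑h| ≤ ε₆} = Set.univ := by
          ext hh; simp [h2]
        rw [this]; exact isClosed_univ
    · have : {h : ↥S | k ≤ m → k ≤ n' → |T m ↑h - T n' ↑h| ≤ ε₆} = Set.univ := by
        ext hh; simp [h1]
      rw [this]; exact isClosed_univ
  have hcover : ⋃ k, F k = Set.univ := by
    refine Set.eq_univ_of_forall fun h => ?_
    set A : Set X := (⇑(h : Lp ℝ 1 μ)) ⁻¹' {1} with hAdef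
    have hA : MeasurableSet A :=
      (Lp.stronglyMeasurable (h : Lp ℝ 1 μ)).measurable (measurableSet_singleton 1)
    have heqA : ⇑(h : Lp ℝ 1 μ) =ᵐ[μ] A.indicator (fun _ => (1:ℝ)) := by
      filter_upwards [h.2] with x hx
      rcases hx with e | e
      · have hxA : x ∉ A := by
          intro hc
          rw [Set.mem_preimage, Set.mem_singleton_iff] at hc
          rw [e] at hc; norm_num at hc
        rw [e, Set.indicator_of_notMem hxA]
      · have hxA : x ∈ A := by
          rw [Set.mem_preimage, Set.mem_singleton_iff]; exact e
        rw [e, Set.indicator_of_mem hxA]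
    obtain ⟨L, hL⟩ := hconv A hA
    obtain ⟨N, hN⟩ := Metric.cauchySeq_iff.mp hL.cauchySeq ε₆ hε₆
    refine Set.mem_iUnion.mpr ⟨N, ?_⟩
    simp only [hFdef, Set.mem_iInter, Set.mem_setOf_eq]
    intro m n' h1 h2
    rw [hTind m _ A hA heqA, hTind n' _ A hA heqA]
    have := hN m h1 n' h2
    rw [Real.dist_eq] at this
    exact this.le
  -- Baire category
  obtain ⟨k, h₀, hh₀⟩ := nonempty_interior_of_iUnion_of_closed hFclosed hcover
  obtain ⟨r, hr, hballsub⟩ := Metric.mem_nhds_iff.mp (mem_interior_iff_mem_nhds.mp hh₀)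
  have hball : Metric.ball h₀ r ⊆ F k := hballsub
  set A₀ : Set X := (⇑(h₀ : Lp ℝ 1 μ)) ⁻¹' {1} with hA₀def
  have hA₀ : MeasurableSet A₀ :=
    (Lp.stronglyMeasurable (h₀ : Lp ℝ 1 μ)).measurable (measurableSet_singleton 1)
  have heq₀ : ⇑(h₀ : Lp ℝ 1 μ) =ᵐ[μ] A₀.indicator (fun _ => (1:ℝ)) := by
    filter_upwards [h₀.2] with x hx
    rcases hx with e | e
    · have hxA : x ∉ A₀ := by
        intro hc
        rw [Set.mem_preimage, Set.mem_singleton_iff] at hc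
        rw [e] at hc; norm_num at hc
      rw [e, Set.indicator_of_notMem hxA]
    · have hxA : x ∈ A₀ := by
        rw [Set.mem_preimage, Set.mem_singleton_iff]; exact e
      rw [e, Set.indicator_of_mem hxA]
  -- δ for the first k+1 functions
  choose δf hδf0 hδf using fun j => abscont (hfn j) hε₆
  set δ' : ℝ≥0∞ := (Finset.range (k+1)).inf δf with hδ'def
  have hδ'pos : 0 < δ' :=
    (Finset.lt_inf_iff (by simp : (0:ℝ≥0∞) < ⊤)).mpr fun j _ => hδf0 j
  have hδ'le : ∀ j, j ≤ k → ∀ s : Set X, μ s < δ' → ∫ x in s, |fn j x| ∂μ < ε₆ := by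
    intro j hj s hs
    exact hδf j s (hs.trans_le (Finset.inf_le (Finset.mem_range.mpr (Nat.lt_succ_of_le hj))))
  refine ⟨min δ' (ENNReal.ofReal r), lt_min hδ'pos (ENNReal.ofReal_pos.mpr hr), ?_⟩
  intro n E hE hEδ
  -- an Lp indicator element for any measurable set
  have mkInd : ∀ B : Set X, MeasurableSet B → ∃ u : ↥S,
      (⇑(↑u : Lp ℝ 1 μ)) =ᵐ[μ] B.indicator (fun _ => (1:ℝ)) := by
    intro B hB
    have hint : Integrable (B.indicator (fun _ => (1:ℝ))) μ := (integrable_const 1).indicator hB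
    have hmem : MemLp (B.indicator (fun _ => (1:ℝ))) 1 μ := memLp_one_iff_integrable.mpr hint
    refine ⟨⟨hmem.toLp _, ?_⟩, hmem.coeFn_toLp⟩
    filter_upwards [hmem.coeFn_toLp] with x hx
    rw [hx]
    by_cases hxB : x ∈ B
    · exact Or.inr (Set.indicator_of_mem hxB _)
    · exact Or.inl (Set.indicator_of_notMem hxB _)
  -- uniform bound for plain set integrals
  have claim : ∀ E' : Set X, MeasurableSet E' → μ E' < min δ' (ENNReal.ofReal r) →
      |∫ x in E', fn n x ∂μ| ≤ 3 * ε₆ := by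
    intro E' hE' hE'δ
    have hE'δ' : μ E' < δ' := hE'δ.trans_le (min_le_left _ _)
    have hE'r : μ E' < ENNReal.ofReal r := hE'δ.trans_le (min_le_right _ _)
    by_cases hn : n ≤ k
    · calc |∫ x in E', fn n x ∂μ| ≤ ∫ x in E', |fn n x| ∂μ := by
            simpa [Real.norm_eq_abs] using
              norm_integral_le_integral_norm (μ := μ.restrict E') (fn n)
        _ ≤ 3 * ε₆ := (hδ'le n hn E' hE'δ').le.trans (by linarith)
    push_neg at hn
    have hkn : k ≤ n := hn.le
    obtain ⟨u₁, hequ₁⟩ := mkInd (A₀ ∪ E') (hA₀.union hE')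
    obtain ⟨u₂, hequ₂⟩ := mkInd (A₀ \ E') (hA₀.diff hE')
    -- distances to the center
    have hdist : ∀ (u : ↥S) (B : Set X), MeasurableSet B →
        (⇑(↑u : Lp ℝ 1 μ)) =ᵐ[μ] B.indicator (fun _ => (1:ℝ)) →
        (∀ x, |B.indicator (fun _ => (1:ℝ)) x - A₀.indicator (fun _ => (1:ℝ)) x|
          = ((B \ A₀) ∪ (A₀ \ B)).indicator (fun _ => (1:ℝ)) x) →
        μ (((B \ A₀) ∪ (A₀ \ B))) ≤ μ E' → u ∈ F k := by
      intro u B hB hequ hpt hμB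
      apply hball
      rw [Metric.mem_ball, Subtype.dist_eq, L1.dist_eq_integral_dist]
      have h1 : ∫ x, dist ((↑u : Lp ℝ 1 μ) x) ((h₀ : Lp ℝ 1 μ) x) ∂μ
          = ∫ x, ((B \ A₀) ∪ (A₀ \ B)).indicator (fun _ => (1:ℝ)) x ∂μ := by
        refine integral_congr_ae ?_
        filter_upwards [hequ, heq₀] with x hx1 hx2
        rw [Real.dist_eq, hx1, hx2, hpt x]
      rw [h1, integral_indicator_const (1:ℝ) ((hB.diff hA₀).union (hA₀.diff hB))]
      have h2 : μ ((B \ A₀) ∪ (A₀ \ B)) < ENNReal.ofReal r := lt_of_le_of_lt hμB hE'r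
      have := (ENNReal.lt_ofReal_iff_toReal_lt (measure_ne_top μ _)).mp h2
      simpa [measureReal_def] using this
    have hmem₁ : u₁ ∈ F k := by
      refine hdist u₁ (A₀ ∪ E') (hA₀.union hE') hequ₁ (fun x => ?_) ?_
      · by_cases hx1 : x ∈ A₀ <;> by_cases hx2 : x ∈ E' <;>
          simp [Set.indicator, hx1, hx2]
      · refine measure_mono fun x hx => ?_
        rcases hx with ⟨hx1, hx2⟩ | ⟨hx1, hx2⟩
        · rcases hx1 with hh | hh
          · exact absurd hh hx2
          · exact hh
        · exact absurd (Set.mem_union_left _ hx1) hx2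
    have hmem₂ : u₂ ∈ F k := by
      refine hdist u₂ (A₀ \ E') (hA₀.diff hE') hequ₂ (fun x => ?_) ?_
      · by_cases hx1 : x ∈ A₀ <;> by_cases hx2 : x ∈ E' <;>
          simp [Set.indicator, hx1, hx2]
      · refine measure_mono fun x hx => ?_
        rcases hx with ⟨hx1, hx2⟩ | ⟨hx1, hx2⟩
        · exact absurd hx1.1 hx2
        · by_contra hc
          exact hx2 ⟨hx1, hc⟩
    simp only [hFdef, Set.mem_iInter, Set.mem_setOf_eq] at hmem₁ hmem₂
    have e1 : |T n ↑u₁ - T k ↑u₁| ≤ ε₆ := hmem₁ n k hkn le_rfl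
    have e2 : |T n ↑u₂ - T k ↑u₂| ≤ ε₆ := hmem₂ n k hkn le_rfl
    have e3 : |∫ x in E', fn k x ∂μ| ≤ ε₆ := by
      calc |∫ x in E', fn k x ∂μ| ≤ ∫ x in E', |fn k x| ∂μ := by
            simpa [Real.norm_eq_abs] using
              norm_integral_le_integral_norm (μ := μ.restrict E') (fn k)
        _ ≤ ε₆ := (hδ'le k le_rfl E' hE'δ').le
    have hsplit : ∀ m : ℕ, T m ↑u₁ - T m ↑u₂ = ∫ x in E', fn m x ∂μ := by
      intro m
      rw [hTind m _ _ (hA₀.union hE') hequ₁, hTind m _ _ (hA₀.diff hE') hequ₂]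
      have hu : A₀ ∪ E' = (A₀ \ E') ∪ E' := (Set.diff_union_self).symm
      rw [hu, setIntegral_union disjoint_sdiff_self_left hE'
        ((hfn m).integrableOn) ((hfn m).integrableOn)]
      ring
    have hrn : ∫ x in E', fn n x ∂μ
        = (T n ↑u₁ - T k ↑u₁) - (T n ↑u₂ - T k ↑u₂) + (T k ↑u₁ - T k ↑u₂) := by
      rw [← hsplit n]; ring
    rw [hrn, hsplit k]
    calc |(T n ↑u₁ - T k ↑u₁) - (T n ↑u₂ - T k ↑u₂) + ∫ x in E', fn k x ∂μ|
        ≤ |(T n ↑u₁ - T k ↑u₁) - (T n ↑u₂ - T k ↑u₂)| + |∫ x in E', fn k x ∂μ| :=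
          abs_add_le _ _
      _ ≤ (|T n ↑u₁ - T k ↑u₁| + |T n ↑u₂ - T k ↑u₂|) + |∫ x in E', fn k x ∂μ| :=
          add_le_add_left (abs_sub _ _) _
      _ ≤ 3 * ε₆ := by linarith
  -- upgrade to absolute values
  set fm := (hfn n).1.mk (fn n) with hfmdef
  have hfmm : Measurable fm := (hfn n).1.stronglyMeasurable_mk.measurable
  have hfme : fn n =ᵐ[μ] fm := (hfn n).1.ae_eq_mk
  set P : Set X := {x | 0 ≤ fm x} with hPdef
  have hP : MeasurableSet P := measurableSet_le measurable_const hfmm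
  have hintabs : IntegrableOn (fun x => |fm x|) E μ := (((hfn n).congr hfme).abs).integrableOn
  have habs_ae : (fun x => |fn n x|) =ᵐ[μ] fun x => |fm x| := by
    filter_upwards [hfme] with x hx
    rw [hx]
  have hmm : fm =ᵐ[μ] fn n := hfme.symm
  have h1 : ∫ x in E, |fn n x| ∂μ = ∫ x in E, |fm x| ∂μ :=
    integral_congr_ae (ae_restrict_of_ae habs_ae)
  have hEeq : E = (E ∩ P) ∪ (E \ P) := (Set.inter_union_diff E P).symm
  have hsplit2 : ∫ x in E, |fm x| ∂μ
      = ∫ x in E ∩ P, |fm x| ∂μ + ∫ x in E \ P, |fm x| ∂μ := by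
    conv_lhs => rw [hEeq]
    exact setIntegral_union (Set.disjoint_left.mpr fun x hx1 hx2 => hx2.2 hx1.2)
      (hE.diff hP) (hintabs.mono_set Set.inter_subset_left)
      (hintabs.mono_set Set.diff_subset)
  have hb1 : ∫ x in E ∩ P, |fm x| ∂μ ≤ 3 * ε₆ := by
    have hc1 : ∫ x in E ∩ P, |fm x| ∂μ = ∫ x in E ∩ P, fn n x ∂μ := by
      rw [setIntegral_congr_fun (hE.inter hP) (fun x hx => abs_of_nonneg hx.2)]
      exact integral_congr_ae (ae_restrict_of_ae hmm)
    rw [hc1]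
    refine (le_abs_self _).trans (claim _ (hE.inter hP) ?_)
    exact lt_of_le_of_lt (measure_mono Set.inter_subset_left) hEδ
  have hb2 : ∫ x in E \ P, |fm x| ∂μ ≤ 3 * ε₆ := by
    have hc2 : ∫ x in E \ P, |fm x| ∂μ = -∫ x in E \ P, fn n x ∂μ := by
      rw [setIntegral_congr_fun (hE.diff hP)
        (fun x hx => abs_of_neg (lt_of_not_ge hx.2))]
      rw [integral_neg]
      congr 1
      exact integral_congr_ae (ae_restrict_of_ae hmm)
    rw [hc2]
    have hcl := claim _ (hE.diff hP) (lt_of_le_of_lt (measure_mono Set.diff_subset) hEδ)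
    have h2 := abs_le.mp hcl
    linarith [h2.1]
  rw [h1, hsplit2]
  have : ε₆ = ε / 6 := hε₆def
  linarith

end Helpers

set_option maxHeartbeats 800000

/-- If `fₙ ⇀ f` weakly in `L¹(X,μ)` (μ finite) and `gₙ → g` μ-a.e. with
`|gₙ| ≤ C` uniformly, then `∫ f g dμ = lim ∫ fₙ gₙ dμ`. -/
theorem stmt0 {X : Type*} [MeasurableSpace X] (μ : Measure X) [IsFiniteMeasure μ]
    (f : X → ℝ) (fn : ℕ → X → ℝ) (g : X → ℝ) (gn : ℕ → X → ℝ) (C : ℝ) (hC : 0 < C)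
    (hf : Integrable f μ) (hfn : ∀ n, Integrable (fn n) μ)
    (hgn : ∀ n, Integrable (gn n) μ)
    (hweak : ∀ h : X → ℝ, Measurable h → (∃ B : ℝ, ∀ x, |h x| ≤ B) →
      Tendsto (fun n => ∫ x, fn n x * h x ∂μ) atTop (𝓝 (∫ x, f x * h x ∂μ)))
    (hae : ∀ᵐ x ∂μ, Tendsto (fun n => gn n x) atTop (𝓝 (g x)))
    (hbd : ∀ n, ∀ x, |gn n x| ≤ C) :
    Tendsto (fun n => ∫ x, fn n x * gn n x ∂μ) atTop (𝓝 (∫ x, f x * g x ∂μ)) := by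
  -- measurable bounded versions of gn
  set Gn : ℕ → X → ℝ := fun n x => max (-C) (min C ((hgn n).1.mk (gn n) x)) with hGndef
  have hGnm : ∀ n, Measurable (Gn n) := fun n =>
    measurable_const.max (measurable_const.min (hgn n).1.stronglyMeasurable_mk.measurable)
  have hGnb : ∀ n x, |Gn n x| ≤ C := by
    intro n x
    rw [abs_le]
    exact ⟨le_max_left _ _, max_le (by linarith) (min_le_left _ _)⟩
  have hGne : ∀ n, gn n =ᵐ[μ] Gn n := by
    intro n
    filter_upwards [(hgn n).1.ae_eq_mk] with x hx
    rw [hGndef]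
    dsimp only
    rw [← hx]
    rcases abs_le.mp (hbd n x) with ⟨h1, h2⟩
    rw [min_eq_right h2, max_eq_right h1]
  -- a measurable bounded version of g
  have hgbd : ∀ᵐ x ∂μ, |g x| ≤ C := by
    filter_upwards [hae] with x hx
    exact le_of_tendsto hx.abs (Eventually.of_forall fun n => hbd n x)
  have hgaem : AEMeasurable g μ :=
    aemeasurable_of_tendsto_metrizable_ae' (fun n => (hgn n).1.aemeasurable) hae
  set g' : X → ℝ := fun x => max (-C) (min C (hgaem.mk g x)) with hg'def
  have hg'm : Measurable g' :=
    measurable_const.max (measurable_const.min hgaem.measurable_mk)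
  have hg'b : ∀ x, |g' x| ≤ C := by
    intro x
    rw [abs_le]
    exact ⟨le_max_left _ _, max_le (by linarith) (min_le_left _ _)⟩
  have hgg' : g =ᵐ[μ] g' := by
    filter_upwards [hgaem.ae_eq_mk, hgbd] with x hx hb
    rw [hg'def]
    dsimp only
    rw [← hx]
    rcases abs_le.mp hb with ⟨h1, h2⟩
    rw [min_eq_right h2, max_eq_right h1]
  -- a.e. convergence of the measurable versions
  have haeG : ∀ᵐ x ∂μ, Tendsto (fun n => Gn n x) atTop (𝓝 (g' x)) := by
    have hall : ∀ᵐ x ∂μ, ∀ n, gn n x = Gn n x := ae_all_iff.mpr hGne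
    filter_upwards [hae, hall, hgg'] with x hx hallx hgx
    rw [← hgx]
    exact hx.congr hallx
  -- convergence in measure
  have htm : TendstoInMeasure μ Gn atTop g' :=
    tendstoInMeasure_of_tendsto_ae (fun n => (hGnm n).aestronglyMeasurable) haeG
  -- uniform L¹ norm bound
  obtain ⟨M, hM0, hMle⟩ := normbound fn hfn (fun h hm hb => ⟨_, hweak h hm hb⟩)
  -- set-integral convergence for uac
  have hconvA : ∀ A : Set X, MeasurableSet A →
      ∃ L, Tendsto (fun n => ∫ x in A, fn n x ∂μ) atTop (𝓝 L) := by
    intro A hA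
    have hm : Measurable (A.indicator (fun _ => (1:ℝ))) := measurable_const.indicator hA
    have hb : ∃ B : ℝ, ∀ x, |A.indicator (fun _ => (1:ℝ)) x| ≤ B := by
      refine ⟨1, fun x => ?_⟩
      by_cases hx : x ∈ A <;> simp [hx]
    have heq : ∀ m : ℕ, ∫ x, fn m x * A.indicator (fun _ => (1:ℝ)) x ∂μ
        = ∫ x in A, fn m x ∂μ := by
      intro m
      rw [← integral_indicator hA]
      refine integral_congr_ae (Eventually.of_forall fun x => ?_)
      by_cases hx : x ∈ A <;> simp [hx]
    refine ⟨∫ x, f x * A.indicator (fun _ => (1:ℝ)) x ∂μ, ?_⟩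
    have := hweak _ hm hb
    refine this.congr fun m => heq m
  -- integrability of all the products
  have hib : ∀ (w : X → ℝ), Integrable w μ → ∀ (v : X → ℝ), AEStronglyMeasurable v μ →
      (∀ x, |v x| ≤ C) → Integrable (fun x => w x * v x) μ := by
    intro w hw v hv hvb
    exact (hw.bdd_mul (c := C) hv (Eventually.of_forall fun x => by
      simpa [Real.norm_eq_abs] using hvb x)).congr
      (Eventually.of_forall fun x => mul_comm _ _)
  have hiG : ∀ n, Integrable (fun x => fn n x * Gn n x) μ := fun n =>
    hib _ (hfn n) _ (hGnm n).aestronglyMeasurable (hGnb n)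
  have hig' : ∀ n, Integrable (fun x => fn n x * g' x) μ := fun n =>
    hib _ (hfn n) _ hg'm.aestronglyMeasurable hg'b
  -- the key estimate
  have key : Tendsto (fun n => ∫ x, fn n x * Gn n x ∂μ - ∫ x, fn n x * g' x ∂μ)
      atTop (𝓝 0) := by
    rw [NormedAddCommGroup.tendsto_nhds_zero]
    intro ε hε
    have hεuac : 0 < ε / (4*C+4) := by positivity
    obtain ⟨δ, hδpos, hδ⟩ := uac fn hfn hconvA hεuac
    set ε' : ℝ := ε / (2*(M+1)) with hε'def
    have hε'pos : 0 < ε' := by positivity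
    have hev : ∀ᶠ n in atTop, μ {x | ε' ≤ dist (Gn n x) (g' x)} < δ :=
      (tendstoInMeasure_iff_dist.mp htm ε' hε'pos).eventually_lt_const hδpos
    filter_upwards [hev] with n hn
    set D : Set X := {x | ε' ≤ dist (Gn n x) (g' x)} with hDdef
    have hD : MeasurableSet D :=
      measurableSet_le measurable_const ((hGnm n).dist hg'm)
    have hDsmall : ∫ x in D, |fn n x| ∂μ ≤ ε / (4*C+4) := hδ n D hD hn
    rw [← integral_sub (hiG n) (hig' n)]
    have hpt : ∀ x, |fn n x * Gn n x - fn n x * g' x|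
        ≤ ε' * |fn n x| + D.indicator (fun x => (2*C) * |fn n x|) x := by
      intro x
      have h1 : fn n x * Gn n x - fn n x * g' x = fn n x * (Gn n x - g' x) := by ring
      rw [h1, abs_mul]
      by_cases hx : x ∈ D
      · rw [Set.indicator_of_mem hx]
        have ha := abs_le.mp (hGnb n x)
        have hb2 := abs_le.mp (hg'b x)
        have h2 : |Gn n x - g' x| ≤ 2*C := by
          rw [abs_le]; constructor <;> linarith
        have h3 : |fn n x| * |Gn n x - g' x| ≤ |fn n x| * (2*C) :=
          mul_le_mul_of_nonneg_left h2 (abs_nonneg _)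
        nlinarith [abs_nonneg (fn n x), hε'pos.le]
      · have h2 : |Gn n x - g' x| ≤ ε' := by
          have : ¬ ε' ≤ dist (Gn n x) (g' x) := hx
          rw [Real.dist_eq] at this
          linarith [le_of_not_ge this]
        rw [Set.indicator_of_notMem hx]
        calc |fn n x| * |Gn n x - g' x| ≤ |fn n x| * ε' :=
              mul_le_mul_of_nonneg_left h2 (abs_nonneg _)
          _ = ε' * |fn n x| := mul_comm _ _
          _ ≤ ε' * |fn n x| + 0 := by simp
    have hLi : Integrable (fun x => fn n x * Gn n x - fn n x * g' x) μ := (hiG n).sub (hig' n)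
    have hRi : Integrable (fun x => ε' * |fn n x| + D.indicator (fun x => (2*C) * |fn n x|) x) μ :=
      ((hfn n).abs.const_mul ε').add (((hfn n).abs.const_mul (2*C)).indicator hD)
    calc ‖∫ x, (fn n x * Gn n x - fn n x * g' x) ∂μ‖
        ≤ ∫ x, |fn n x * Gn n x - fn n x * g' x| ∂μ := by
          simpa [Real.norm_eq_abs] using norm_integral_le_integral_norm (μ := μ)
            (fun x => fn n x * Gn n x - fn n x * g' x)
      _ ≤ ∫ x, (ε' * |fn n x| + D.indicator (fun x => (2*C) * |fn n x|) x) ∂μ :=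
          integral_mono_ae hLi.abs hRi (Eventually.of_forall hpt)
      _ = ε' * ∫ x, |fn n x| ∂μ + (2*C) * ∫ x in D, |fn n x| ∂μ := by
          rw [integral_add ((hfn n).abs.const_mul ε')
            (((hfn n).abs.const_mul (2*C)).indicator hD),
            integral_const_mul, integral_indicator hD, integral_const_mul]
      _ < ε := by
          have hI1 : ∫ x, |fn n x| ∂μ ≤ M := hMle n
          have hDnn : (0:ℝ) ≤ ∫ x in D, |fn n x| ∂μ := integral_nonneg fun x => abs_nonneg _
          have e1 : ε' * ∫ x, |fn n x| ∂μ ≤ ε' * M := mul_le_mul_of_nonneg_left hI1 hε'pos.le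
          have e2 : (2*C) * ∫ x in D, |fn n x| ∂μ ≤ (2*C) * (ε / (4*C+4)) :=
            mul_le_mul_of_nonneg_left hDsmall (by linarith)
          have e3 : ε' * M < ε/2 := by
            rw [hε'def, div_mul_eq_mul_div, div_lt_iff₀ (by linarith : (0:ℝ) < 2*(M+1))]
            nlinarith
          have e4 : (2*C) * (ε / (4*C+4)) < ε/2 := by
            rw [← mul_div_assoc, div_lt_iff₀ (by linarith : (0:ℝ) < 4*C+4)]
            nlinarith
          linarith
  -- conclusion
  have h2 : Tendsto (fun n => ∫ x, fn n x * g' x ∂μ) atTop (𝓝 (∫ x, f x * g' x ∂μ)) :=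
    hweak g' hg'm ⟨C, hg'b⟩
  have h4 : Tendsto (fun n => ∫ x, fn n x * Gn n x ∂μ) atTop (𝓝 (∫ x, f x * g' x ∂μ)) := by
    have := key.add h2
    simpa using this
  have hfg : ∫ x, f x * g x ∂μ = ∫ x, f x * g' x ∂μ := by
    refine integral_congr_ae ?_
    filter_upwards [hgg'] with x hx
    rw [hx]
  have hfge : ∀ n, ∫ x, fn n x * gn n x ∂μ = ∫ x, fn n x * Gn n x ∂μ := by
    intro n
    refine integral_congr_ae ?_
    filter_upwards [hGne n] with x hx
    rw [hx]
  rw [hfg]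
  exact h4.congr fun n => (hfge n).symm
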